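/- Let q ∈ {2,3} and C ⊆ F_{q^m}^n a k-dimensional F_{q^m}-subspace with dim(C ∩ C^⊥) = 1. Then there exists A ∈ GL_n(F_q) such that C' = {vA : v ∈ C} satisfies C' ∩ C'^⊥ = {0}. -/

import Mathlib

open Matrix

/-- The dual code of a subspace of `Fin n → F` with respect to the standard
bilinear form `⟨v, w⟩ = ∑ i, v i * w i`. -/
def dualCode {F : Type*} [CommRing F] {n : ℕ} (C : Submodule F (Fin n → F)) :
    Submodule F (Fin n → F) where
  carrier := {v | ∀ w ∈ C, v ⬝ᵥ w = 0}
  add_mem' := by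
    intro a b ha hb w hw
    simp [add_dotProduct, ha w hw, hb w hw]
  zero_mem' := by
    intro w hw
    simp
  smul_mem' := by
    intro c a ha w hw
    simp [smul_dotProduct, ha w hw]

/-- Right multiplication by a matrix with entries in the subfield `Fq`,
as a linear map on `Fin n → F`. -/
noncomputable def rightMulCode {Fq F : Type*} [Field Fq] [Field F] [Algebra Fq F]
    {n : ℕ} (A : Matrix (Fin n) (Fin n) Fq) :
    (Fin n → F) →ₗ[F] (Fin n → F) :=
  (A.map (algebraMap Fq F)).vecMulLinear

section Auxiliary

lemma mem_dualCode {F : Type*} [CommRing F] {n : ℕ} {C : Submodule F (Fin n → F)}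
    {v : Fin n → F} : v ∈ dualCode C ↔ ∀ w ∈ C, v ⬝ᵥ w = 0 := Iff.rfl

variable {Fq F : Type*} [Field Fq] [Field F] [Algebra Fq F] {n : ℕ}

/-- The "transvection-like" matrix `1 + e_i zᵀ`. -/
def tvMat (i : Fin n) (z : Fin n → Fq) : Matrix (Fin n) (Fin n) Fq :=
  1 + Matrix.of (fun s t => if s = i then z t else 0)

lemma tvMat_isUnit (i : Fin n) (z : Fin n → Fq) (hzi : z i = 0) : IsUnit (tvMat i z) := by
  set N : Matrix (Fin n) (Fin n) Fq := Matrix.of (fun s t => if s = i then z t else 0) with hN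
  have hNN : N * N = 0 := by
    ext s t
    simp [hN, Matrix.mul_apply, ite_mul, hzi]
  have h1 : (1 + N) * (1 - N) = 1 := by
    have : (1 + N) * (1 - N) = 1 - N * N := by noncomm_ring
    rw [this, hNN, sub_zero]
  have h2 : (1 - N) * (1 + N) = 1 := by
    have : (1 - N) * (1 + N) = 1 - N * N := by noncomm_ring
    rw [this, hNN, sub_zero]
  exact ⟨⟨1 + N, 1 - N, h1, h2⟩, rfl⟩

lemma vecMul_tvMat (i : Fin n) (z : Fin n → Fq) (v : Fin n → F) :
    v ᵥ* ((tvMat i z).map (algebraMap Fq F)) = v + (v i) • (fun t => algebraMap Fq F (z t)) := by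
  funext t
  simp only [Matrix.vecMul, dotProduct, tvMat, Matrix.map_apply, Matrix.add_apply,
    Matrix.of_apply, Matrix.one_apply, map_add, Pi.add_apply, Pi.smul_apply, smul_eq_mul,
    apply_ite (algebraMap Fq F), _root_.map_one, _root_.map_zero]
  simp [mul_add, Finset.sum_add_distrib, mul_ite, Finset.sum_ite_eq']

lemma rightMulCode_tvMat_apply (i : Fin n) (z : Fin n → Fq) (v : Fin n → F) :
    rightMulCode (tvMat i z) v = v + (v i) • (fun t => algebraMap Fq F (z t)) := by
  rw [rightMulCode, Matrix.vecMulLinear_apply, vecMul_tvMat]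

lemma single_dot (t : Fin n) (c : Fq) (u : Fin n → F) :
    (fun s => algebraMap Fq F ((Pi.single t c : Fin n → Fq) s)) ⬝ᵥ u
      = algebraMap Fq F c * u t := by
  simp only [dotProduct, Pi.single_apply, apply_ite (algebraMap Fq F),
    _root_.map_zero, ite_mul, zero_mul]
  exact (Finset.sum_ite_eq' Finset.univ t (fun s => algebraMap Fq F c * u s)).trans
    (if_pos (Finset.mem_univ t))

lemma sum_dotProduct' {F : Type*} [CommRing F] {n : ℕ} (f : Fin n → (Fin n → F))
    (v : Fin n → F) : (∑ t, f t) ⬝ᵥ v = ∑ t, (f t ⬝ᵥ v) := by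
  simp [dotProduct, Finset.sum_apply, Finset.sum_mul]
  exact Finset.sum_comm

/-- The key sufficient criterion: if the quadratic quantity `E(z)` is nonzero then
the moved code is LCD. -/
lemma good (C : Submodule F (Fin n → F)) (x : Fin n → F) (hxC : x ∈ C)
    (hxd : ∀ u ∈ C, x ⬝ᵥ u = 0)
    (hspan : ∀ v ∈ C, (∀ u ∈ C, v ⬝ᵥ u = 0) → ∃ μ : F, v = μ • x)
    (i : Fin n) (ha : x i ≠ 0) (z : Fin n → Fq) (hzi : z i = 0)
    (w₀ : Fin n → F) (hw₀C : w₀ ∈ C)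
    (hw₀ : ∀ u ∈ C, w₀ ⬝ᵥ u =
      (fun t => algebraMap Fq F (z t)) ⬝ᵥ u
        - ((fun t => algebraMap Fq F (z t)) ⬝ᵥ x / x i) * u i)
    (hE : w₀ ⬝ᵥ w₀ - (fun t => algebraMap Fq F (z t)) ⬝ᵥ (fun t => algebraMap Fq F (z t))
        - 2 * ((fun t => algebraMap Fq F (z t)) ⬝ᵥ x) / x i ≠ 0) :
    C.map (rightMulCode (tvMat i z)) ⊓ dualCode (C.map (rightMulCode (tvMat i z))) = ⊥ := by
  set zF : Fin n → F := fun t => algebraMap Fq F (z t) with hzF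
  set a : F := x i with haa
  set σ : F := zF ⬝ᵥ zF with hσ
  set p : F := zF ⬝ᵥ x with hp
  rw [Submodule.eq_bot_iff]
  rintro y hy
  rw [Submodule.mem_inf] at hy
  obtain ⟨hy1, hy2⟩ := hy
  obtain ⟨v, hvC, hvy⟩ := Submodule.mem_map.mp hy1
  rw [rightMulCode_tvMat_apply] at hvy
  set c : F := v i with hcc
  rw [mem_dualCode] at hy2
  -- the fundamental relation
  have H' : ∀ u ∈ C, v ⬝ᵥ u + u i * (v ⬝ᵥ zF) + c * (zF ⬝ᵥ u) + c * (u i) * σ = 0 := by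
    intro u hu
    have hm : rightMulCode (tvMat i z) u ∈ C.map (rightMulCode (tvMat i z)) :=
      Submodule.mem_map_of_mem hu
    have h := hy2 _ hm
    rw [rightMulCode_tvMat_apply, ← hvy] at h
    simp only [dotProduct_add, add_dotProduct, dotProduct_smul,
      smul_dotProduct, smul_eq_mul] at h
    linear_combination h
  -- cleared version of hw₀
  have hw₀' : ∀ u ∈ C, a * (w₀ ⬝ᵥ u) = a * (zF ⬝ᵥ u) - p * u i := by
    intro u hu
    have h := hw₀ u hu
    rw [h]
    field_simp
  have hvx : v ⬝ᵥ x = 0 := by rw [dotProduct_comm]; exact hxd v hvC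
  have hB : a * (v ⬝ᵥ zF) + c * p + c * a * σ = 0 := by
    have h := H' x hxC
    linear_combination h - hvx
  -- v + c • w₀ is in the hull
  have hu' : ∀ u ∈ C, (v + c • w₀) ⬝ᵥ u = 0 := by
    intro u hu
    have h := H' u hu
    have h2 := hw₀' u hu
    have key : a * ((v + c • w₀) ⬝ᵥ u) = 0 := by
      simp only [add_dotProduct, smul_dotProduct, smul_eq_mul]
      linear_combination a * h - u i * hB + c * h2
    exact (mul_eq_zero.mp key).resolve_left ha
  obtain ⟨μ, hμ⟩ := hspan (v + c • w₀) (Submodule.add_mem _ hvC (Submodule.smul_mem _ _ hw₀C)) hu'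
  have hμi : c + c * w₀ i = μ * a := by
    have := congrFun hμ i
    simpa using this
  by_cases hc : c = 0
  · -- then v = 0 and y = 0
    have hμ0 : μ = 0 := by
      have h0 : μ * a = 0 := by rw [← hμi, hc]; ring
      rcases mul_eq_zero.mp h0 with h | h
      · exact h
      · exact absurd h ha
    have hv0 : v = 0 := by
      have : v + c • w₀ = μ • x := hμ
      rw [hc, hμ0] at this
      simpa using this
    rw [← hvy, hv0]
    simp [← hcc, hc]
  · exfalso
    apply hE
    have hQ : a * (w₀ ⬝ᵥ w₀) = a * (zF ⬝ᵥ w₀) - p * w₀ i := hw₀' w₀ hw₀C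
    have hvz : v ⬝ᵥ zF + c * (zF ⬝ᵥ w₀) = μ * p := by
      have := congrArg (fun w => w ⬝ᵥ zF) hμ
      simp only [add_dotProduct, smul_dotProduct, smul_eq_mul] at this
      rw [dotProduct_comm w₀ zF, dotProduct_comm x zF] at this
      exact this
    have key : c * (a * (w₀ ⬝ᵥ w₀) - a * σ - 2 * p) = 0 := by
      linear_combination a * hvz + c * hQ - hB - p * hμi
    have key2 : a * (w₀ ⬝ᵥ w₀) - a * σ - 2 * p = 0 := (mul_eq_zero.mp key).resolve_left hc
    field_simp
    linear_combination key2

set_option synthInstance.maxHeartbeats 1000000 in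
set_option maxHeartbeats 1000000 in
/-- Solvability: every functional on `C` killing `x` is represented by dotting
with an element of `C`. -/
lemma solv {F : Type*} [Field F] {n : ℕ} (C : Submodule F (Fin n → F))
    (x : Fin n → F) (hxC : x ∈ C) (hxd : ∀ u ∈ C, x ⬝ᵥ u = 0) (hx0 : x ≠ 0)
    (hone : Module.finrank F ↥(C ⊓ dualCode C) = 1)
    (φ : Module.Dual F ↥C) (hφ : φ ⟨x, hxC⟩ = 0) :
    ∃ w ∈ C, ∀ u : ↥C, w ⬝ᵥ (u : Fin n → F) = φ u := by
  classical
  set V := ↥C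
  set B2 : (Fin n → F) →ₗ[F] (Fin n → F) →ₗ[F] F :=
    LinearMap.mk₂ F (fun v u => v ⬝ᵥ u)
      (fun a b c => add_dotProduct a b c)
      (fun c a b => by simp [smul_dotProduct])
      (fun a b c => dotProduct_add a b c)
      (fun c a b => by simp [dotProduct_smul]) with hB2
  set β : V →ₗ[F] Module.Dual F V := (B2.compl₂ C.subtype).comp C.subtype with hβ
  have hβapp : ∀ (v u : V), β v u = (v : Fin n → F) ⬝ᵥ (u : Fin n → F) := fun v u => rfl
  have hker : LinearMap.ker β = Submodule.comap C.subtype (C ⊓ dualCode C) := by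
    ext v
    simp only [LinearMap.mem_ker, Submodule.mem_comap, Submodule.mem_inf]
    constructor
    · intro h
      refine ⟨v.2, ?_⟩
      rw [mem_dualCode]
      intro u hu
      have := congrArg (fun ψ => ψ (⟨u, hu⟩ : V)) h
      exact (by simpa [hβapp] using this : (v : Fin n → F) ⬝ᵥ u = 0)
    · rintro ⟨-, hd⟩
      apply LinearMap.ext
      intro u
      rw [mem_dualCode] at hd
      have h' : (v : Fin n → F) ⬝ᵥ (u : Fin n → F) = 0 := hd u u.2
      simpa [hβapp] using h'
  have hFD : FiniteDimensional F V := inferInstance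
  have hkerrank : Module.finrank F (LinearMap.ker β) = 1 := by
    rw [hker]
    rw [(Submodule.comapSubtypeEquivOfLe (inf_le_left :
      C ⊓ dualCode C ≤ C)).finrank_eq]
    exact hone
  set xv : V := ⟨x, hxC⟩ with hxv
  have hxv0 : xv ≠ 0 := by
    intro h
    exact hx0 (by simpa [hxv] using congrArg (Subtype.val) h)
  set ev : Module.Dual F V →ₗ[F] F := Module.Dual.eval F V xv with hev
  have hrange_le : LinearMap.range β ≤ LinearMap.ker ev := by
    rintro ψ ⟨v, rfl⟩
    simp only [LinearMap.mem_ker, hev, Module.Dual.eval_apply]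
    rw [hβapp v xv]
    rw [dotProduct_comm]
    exact hxd v v.2
  have hev_surj : Function.Surjective ev := by
    obtain ⟨ψ, hψ⟩ : ∃ ψ : Module.Dual F V, ψ xv ≠ 0 := by
      by_contra h
      push_neg at h
      exact hxv0 ((Module.forall_dual_apply_eq_zero_iff F xv).mp h)
    intro r
    refine ⟨(r * (ψ xv)⁻¹) • ψ, ?_⟩
    simp only [hev, Module.Dual.eval_apply, LinearMap.smul_apply, smul_eq_mul]
    field_simp
  have h1 : Module.finrank F (LinearMap.range β) + 1 = Module.finrank F V := by
    rw [← hkerrank]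
    exact LinearMap.finrank_range_add_finrank_ker β
  have h2 : 1 + Module.finrank F (LinearMap.ker ev) = Module.finrank F V := by
    have h3 := LinearMap.finrank_range_add_finrank_ker ev
    rw [LinearMap.range_eq_top.mpr hev_surj] at h3
    rw [Subspace.dual_finrank_eq] at h3
    rw [← h3]
    congr 1
    rw [finrank_top]
    exact (Module.finrank_self F).symm
  have hre : LinearMap.range β = LinearMap.ker ev := by
    apply Submodule.eq_of_le_of_finrank_le hrange_le
    omega
  have hφmem : φ ∈ LinearMap.range β := by
    rw [hre]
    simp only [LinearMap.mem_ker, hev, Module.Dual.eval_apply]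
    exact hφ
  obtain ⟨w, hw⟩ := hφmem
  refine ⟨(w : Fin n → F), w.2, fun u => ?_⟩
  rw [← hw]
  rfl

end Auxiliary

set_option maxHeartbeats 2000000 in
/-- Theorem 3.6: for `q ∈ {2,3}` and hull dimension 1, there is an equivalent
LCD code. -/
theorem hull_one_equiv_LCD {Fq F : Type*} [Field Fq] [Field F]
    [Fintype Fq] [Fintype F] [Algebra Fq F]
    (hq : Fintype.card Fq = 2 ∨ Fintype.card Fq = 3)
    {n k : ℕ} (C : Submodule F (Fin n → F)) (hk : Module.finrank F C = k)
    (hh : Module.finrank F ↥(C ⊓ dualCode C) = 1) :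
    ∃ A : Matrix (Fin n) (Fin n) Fq, IsUnit A ∧
      C.map (rightMulCode A) ⊓ dualCode (C.map (rightMulCode A)) = ⊥ := by
  classical
  have hD : (C ⊓ dualCode C) ≠ ⊥ := by
    intro h
    rw [h] at hh
    simp at hh
  obtain ⟨x, hxD, hx0⟩ := Submodule.exists_mem_ne_zero_of_ne_bot hD
  rw [Submodule.mem_inf] at hxD
  obtain ⟨hxC, hxdual'⟩ := hxD
  have hxdual : ∀ u ∈ C, x ⬝ᵥ u = 0 := hxdual'
  have hspan : ∀ v ∈ C, (∀ u ∈ C, v ⬝ᵥ u = 0) → ∃ μ : F, v = μ • x := by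
    have hle : Submodule.span F {x} ≤ C ⊓ dualCode C := by
      rw [Submodule.span_le, Set.singleton_subset_iff]
      exact Submodule.mem_inf.mpr ⟨hxC, hxdual'⟩
    have hDspan : Submodule.span F {x} = C ⊓ dualCode C := by
      apply Submodule.eq_of_le_of_finrank_le hle
      rw [hh, finrank_span_singleton hx0]
    intro v hv hvd
    have hvD : v ∈ Submodule.span F {x} := by
      rw [hDspan]; exact Submodule.mem_inf.mpr ⟨hv, hvd⟩
    obtain ⟨μ, hμ⟩ := Submodule.mem_span_singleton.mp hvD
    exact ⟨μ, hμ.symm⟩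
  obtain ⟨i, hxi⟩ : ∃ i, x i ≠ 0 := by
    by_contra h
    push_neg at h
    exact hx0 (funext h)
  have hSOLV : ∀ t, ∃ ww ∈ C, ∀ u ∈ C, ww ⬝ᵥ u = u t - (x t / x i) * u i := by
    intro t
    set φ : Module.Dual F ↥C :=
      (LinearMap.proj t).comp C.subtype
        - (x t / x i) • ((LinearMap.proj i).comp C.subtype) with hφdef
    have hφx : φ ⟨x, hxC⟩ = 0 := by
      simp only [hφdef, LinearMap.sub_apply, LinearMap.smul_apply, LinearMap.comp_apply,
        Submodule.coe_subtype, LinearMap.proj_apply, smul_eq_mul]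
      field_simp
      ring
    obtain ⟨ww, hwwC, hww⟩ := solv C x hxC hxdual hx0 hh φ hφx
    refine ⟨ww, hwwC, fun u hu => ?_⟩
    have := hww ⟨u, hu⟩
    simpa [hφdef] using this
  choose w hwC hw using hSOLV
  by_contra hcon
  push_neg at hcon
  have hbad : ∀ (z : Fin n → Fq), z i = 0 →
      ∀ w₀ ∈ C, (∀ u ∈ C, w₀ ⬝ᵥ u = (fun s => algebraMap Fq F (z s)) ⬝ᵥ u
          - ((fun s => algebraMap Fq F (z s)) ⬝ᵥ x / x i) * u i) →
      w₀ ⬝ᵥ w₀ - (fun s => algebraMap Fq F (z s)) ⬝ᵥ (fun s => algebraMap Fq F (z s))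
        - 2 * ((fun s => algebraMap Fq F (z s)) ⬝ᵥ x) / x i = 0 := by
    intro z hzi w₀ hw₀C hw₀
    by_contra hE
    exact hcon (tvMat i z) (tvMat_isUnit i z hzi)
      (good C x hxC hxdual hspan i hxi z hzi w₀ hw₀C hw₀ hE)
  have heq : ∀ (t : Fin n), t ≠ i → ∀ (c : Fq),
      (algebraMap Fq F c) * (algebraMap Fq F c) * (w t ⬝ᵥ w t)
        - (algebraMap Fq F c) * (algebraMap Fq F c)
        - 2 * ((algebraMap Fq F c) * x t) / x i = 0 := by
    intro t ht c
    have hzi : (Pi.single t c : Fin n → Fq) i = 0 := by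
      simp [Pi.single_eq_of_ne (Ne.symm ht)]
    have hprop : ∀ u ∈ C, ((algebraMap Fq F c) • w t) ⬝ᵥ u
        = (fun s => algebraMap Fq F ((Pi.single t c : Fin n → Fq) s)) ⬝ᵥ u
          - ((fun s => algebraMap Fq F ((Pi.single t c : Fin n → Fq) s)) ⬝ᵥ x / x i) * u i := by
      intro u hu
      rw [single_dot, single_dot, smul_dotProduct, hw t u hu]
      simp only [smul_eq_mul]
      ring
    have h := hbad (Pi.single t c) hzi ((algebraMap Fq F c) • w t)
      (Submodule.smul_mem _ _ (hwC t)) hprop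
    rw [single_dot, single_dot, smul_dotProduct, dotProduct_smul] at h
    simp only [Pi.single_eq_same, smul_eq_mul] at h
    linear_combination h
  have hcardF : ((Fintype.card Fq : ℕ) : F) = 0 := by
    have h := Nat.cast_card_eq_zero Fq
    calc ((Fintype.card Fq : ℕ) : F)
        = algebraMap Fq F ((Fintype.card Fq : ℕ) : Fq) := (map_natCast _ _).symm
      _ = 0 := by rw [h, map_zero]
  rcases hq with hq2 | hq3
  · -- the binary case
    have h2 : (2 : F) = 0 := by
      rw [hq2] at hcardF
      exact_mod_cast hcardF
    have hQ1 : ∀ t, t ≠ i → w t ⬝ᵥ w t = 1 := by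
      intro t ht
      have h := heq t ht 1
      rw [_root_.map_one] at h
      rw [h2] at h
      linear_combination h
    let sq : (Fin n → F) →+ F :=
      { toFun := fun v => v ⬝ᵥ v
        map_zero' := by simp
        map_add' := by
          intro u v
          simp only [dotProduct_add, add_dotProduct]
          linear_combination dotProduct_comm v u + (u ⬝ᵥ v) * h2 }
    set cvec : Fin n → F := Function.update x i 0 with hcvec
    have hcvi : cvec i = 0 := by simp [hcvec]
    have hcdot : ∀ u : Fin n → F, cvec ⬝ᵥ u = x ⬝ᵥ u - x i * u i := by
      intro u
      have hterm : ∀ s, cvec s * u s = x s * u s - (if s = i then x i * u i else 0) := by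
        intro s
        rcases eq_or_ne s i with rfl | hs
        · simp [hcvec]
        · simp [hcvec, Function.update_of_ne hs, if_neg hs]
      simp only [dotProduct]
      rw [Finset.sum_congr rfl (fun s _ => hterm s), Finset.sum_sub_distrib]
      rw [(Finset.sum_ite_eq' Finset.univ i (fun _ => x i * u i)).trans
        (if_pos (Finset.mem_univ i))]
    set W : Fin n → F := ∑ t, cvec t • w t with hW
    have hWC : W ∈ C := Submodule.sum_mem _ fun t _ => Submodule.smul_mem _ _ (hwC t)
    have hWdot : ∀ u ∈ C, W ⬝ᵥ u = 0 := by
      intro u hu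
      have hexp : W ⬝ᵥ u = ∑ t, cvec t * (w t ⬝ᵥ u) := by
        rw [hW, sum_dotProduct']
        exact Finset.sum_congr rfl fun t _ => by
          rw [smul_dotProduct]; simp
      rw [hexp, Finset.sum_congr rfl (fun t _ => by rw [hw t u hu])]
      have hsplit : ∀ t : Fin n, cvec t * (u t - x t / x i * u i)
          = cvec t * u t - (cvec t * x t) * (u i / x i) := fun t => by ring
      rw [Finset.sum_congr rfl (fun t _ => hsplit t), Finset.sum_sub_distrib, ← Finset.sum_mul]
      have e1 : ∑ t, cvec t * u t = cvec ⬝ᵥ u := rfl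
      have e2 : ∑ t, cvec t * x t = cvec ⬝ᵥ x := rfl
      rw [e1, e2, hcdot u, hcdot x, hxdual u hu, hxdual x hxC]
      field_simp
      ring
    have hW0 : W ⬝ᵥ W = 0 := hWdot W hWC
    have hWsq : W ⬝ᵥ W = ∑ t, cvec t * cvec t * (w t ⬝ᵥ w t) := by
      have h0 : W ⬝ᵥ W = sq W := rfl
      rw [h0, hW, map_sum]
      refine Finset.sum_congr rfl fun t _ => ?_
      show (cvec t • w t) ⬝ᵥ (cvec t • w t) = _
      rw [smul_dotProduct, dotProduct_smul]
      simp only [smul_eq_mul]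
      ring
    have hdiag : ∑ t, cvec t * cvec t * (w t ⬝ᵥ w t) = ∑ t, cvec t * cvec t := by
      refine Finset.sum_congr rfl fun t _ => ?_
      rcases eq_or_ne t i with rfl | ht
      · rw [hcvi]; ring
      · rw [hQ1 t ht]; ring
    have hcc : (∑ t, cvec t * cvec t) = -(x i * x i) := by
      have e3 : (∑ t, cvec t * cvec t) = cvec ⬝ᵥ cvec := rfl
      rw [e3, hcdot cvec, hcvi, dotProduct_comm x cvec, hcdot x, hxdual x hxC]
      ring
    have hfin : x i * x i = 0 := by
      linear_combination hWsq + hdiag + hcc - hW0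
    exact hxi (mul_self_eq_zero.mp hfin)
  · -- the ternary case
    have h3 : (3 : F) = 0 := by
      rw [hq3] at hcardF
      exact_mod_cast hcardF
    have hxt : ∀ t, t ≠ i → x t = 0 := by
      intro t ht
      have e1 := heq t ht 1
      have e2 := heq t ht (-1)
      rw [_root_.map_one] at e1
      rw [map_neg, _root_.map_one] at e2
      have h4 : (4 : F) * (x t / x i) = 0 := by linear_combination e2 - e1
      have h41 : (4 : F) = 1 := by linear_combination h3
      rw [h41, one_mul] at h4
      rcases div_eq_zero_iff.mp h4 with h | h
      · exact h
      · exact absurd h hxi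
    have hxx : x ⬝ᵥ x = 0 := hxdual x hxC
    have hsum : x ⬝ᵥ x = x i * x i := by
      simp only [dotProduct]
      exact Fintype.sum_eq_single i (fun t ht => by rw [hxt t ht]; ring)
    exact hxi (mul_self_eq_zero.mp (hsum.symm.trans hxx))
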